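/- If x* is a local minimizer of F(x)=f(x)+λ‖x‖_p^p and f is twice continuously differentiable near x*, then the matrix (X*)ᵀ∇²f(x*)X* + λp(p−1)Diag(|x*|^p) is positive semidefinite, where X*=Diag(x*). -/

import Mathlib

open Filter Topology

lemma second_order_nonneg (φ ψ : ℝ → ℝ) (L : ℝ)
    (hφψ : ∀ᶠ t in 𝓝 (0:ℝ), HasDerivAt φ (ψ t) t)
    (hψ : HasDerivAt ψ L 0)
    (hmin : IsLocalMin φ 0) : 0 ≤ L := by
  by_contra hL
  push_neg at hL
  have hψ0 : ψ 0 = 0 := hmin.hasDerivAt_eq_zero hφψ.self_of_nhds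
  have hslope : Tendsto (slope ψ 0) (𝓝[≠] (0:ℝ)) (𝓝 L) :=
    hasDerivAt_iff_tendsto_slope.mp hψ
  have hs : ∀ᶠ t in 𝓝[≠] (0:ℝ), slope ψ 0 t < L / 2 :=
    hslope.eventually_lt_const (by linarith)
  rw [eventually_nhdsWithin_iff] at hs
  have hall : ∀ᶠ t in 𝓝 (0:ℝ),
      HasDerivAt φ (ψ t) t ∧ φ 0 ≤ φ t ∧ (t ≠ 0 → slope ψ 0 t < L / 2) :=
    hφψ.and (hmin.and hs)
  obtain ⟨δ, hδ, hball⟩ := Metric.eventually_nhds_iff.mp hall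
  set t0 := δ / 2 with ht0
  have ht0pos : 0 < t0 := by positivity
  have hmem : ∀ t ∈ Set.Icc (0:ℝ) t0, dist t 0 < δ := by
    intro t ht
    rw [Real.dist_eq, sub_zero, abs_of_nonneg ht.1]
    linarith [ht.2]
  have hcont : ContinuousOn φ (Set.Icc 0 t0) := fun t ht =>
    ((hball (hmem t ht)).1.continuousAt).continuousWithinAt
  have hderiv : ∀ t ∈ Set.Ioo (0:ℝ) t0, deriv φ t < 0 := by
    intro t ht
    have h1 := hball (hmem t ⟨le_of_lt ht.1, le_of_lt ht.2⟩)
    rw [h1.1.deriv]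
    have hsl := h1.2.2 (ne_of_gt ht.1)
    rw [slope_def_field, hψ0, sub_zero, sub_zero, div_lt_iff₀ ht.1] at hsl
    nlinarith [ht.1, hL]
  have hanti : StrictAntiOn φ (Set.Icc 0 t0) := by
    apply strictAntiOn_of_deriv_neg (convex_Icc 0 t0) hcont
    simpa [interior_Icc] using hderiv
  have h2 := hanti (Set.left_mem_Icc.2 (le_of_lt ht0pos))
    (Set.right_mem_Icc.2 (le_of_lt ht0pos)) ht0pos
  have h3 := (hball (hmem t0 (Set.right_mem_Icc.2 (le_of_lt ht0pos)))).2.1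
  linarith

/-- If x* is a local minimizer of F(x) = f(x) + λ‖x‖_p^p with f twice continuously
differentiable near x*, then (X*)ᵀ∇²f(x*)X* + λp(p-1)Diag(|x*|^p) is positive
semidefinite. -/
theorem stmt_9 (n : ℕ) (p lam : ℝ) (hp : 0 < p) (hp1 : p < 1) (hlam : 0 < lam)
    (f : EuclideanSpace ℝ (Fin n) → ℝ)
    (x : EuclideanSpace ℝ (Fin n)) (hf : ContDiffAt ℝ 2 f x)
    (hmin : IsLocalMin (fun y => f y + lam * ∑ i, |y i| ^ p) x) :
    ∀ v : Fin n → ℝ,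
      0 ≤ (∑ i, ∑ j, v i *
            (x i * fderiv ℝ (fun y => fderiv ℝ f y (EuclideanSpace.single j 1)) x
              (EuclideanSpace.single i 1) * x j) * v j) +
          lam * p * (p - 1) * ∑ i, |x i| ^ p * (v i) ^ 2 := by
  intro v
  set d : EuclideanSpace ℝ (Fin n) := WithLp.toLp 2 (fun i => x i * v i) with hd
  set c : Fin n → ℝ := fun i => |x i| ^ p with hc
  set G := fderiv ℝ (fderiv ℝ f) x with hG
  set φ : ℝ → ℝ := fun t => f (x + t • d) + lam * ∑ i, c i * (1 + t * v i) ^ p with hφ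
  set ψ : ℝ → ℝ := fun t =>
    fderiv ℝ f (x + t • d) d + lam * ∑ i, c i * (v i * p * (1 + t * v i) ^ (p - 1)) with hψ
  set L : ℝ := G d d + lam * ∑ i, c i * (v i * p * (v i * (p - 1))) with hL
  have hx0 : x + (0:ℝ) • d = x := by simp
  have hlineC : Continuous (fun t : ℝ => x + t • d) :=
    continuous_const.add (continuous_id.smul continuous_const)
  have htend : Tendsto (fun t : ℝ => x + t • d) (𝓝 0) (𝓝 x) := by
    simpa [hx0] using hlineC.tendsto 0
  have happly : ∀ (t : ℝ) (i : Fin n), (x + t • d) i = x i * (1 + t * v i) := by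
    intro t i
    have : (x + t • d) i = x i + t * d i := rfl
    rw [this, hd]; ring
  have hMpos : ∀ᶠ t in 𝓝 (0:ℝ), ∀ i, 0 < 1 + t * v i := by
    have hb : Metric.ball (0:ℝ) ((∑ i, |v i|) + 1)⁻¹ ∈ 𝓝 (0:ℝ) :=
      Metric.ball_mem_nhds _ (by positivity)
    filter_upwards [hb] with t ht i
    have hMnn : (0:ℝ) ≤ ∑ i, |v i| := Finset.sum_nonneg fun i _ => abs_nonneg _
    have hvM : |v i| ≤ ∑ i, |v i| :=
      Finset.single_le_sum (fun j _ => abs_nonneg (v j)) (Finset.mem_univ i)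
    have ht' : |t| < ((∑ i, |v i|) + 1)⁻¹ := by simpa [Real.dist_eq] using ht
    have h1 : |t * v i| < 1 := by
      rw [abs_mul]
      calc |t| * |v i| ≤ |t| * ((∑ i, |v i|) + 1) :=
            mul_le_mul_of_nonneg_left (by linarith) (abs_nonneg t)
        _ < ((∑ i, |v i|) + 1)⁻¹ * ((∑ i, |v i|) + 1) :=
            mul_lt_mul_of_pos_right ht' (by linarith)
        _ = 1 := by field_simp
    have habs := abs_lt.mp h1
    linarith [habs.1]
  have hminφ : IsLocalMin φ 0 := by
    have hFmin := htend.eventually hmin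
    filter_upwards [hFmin, hMpos] with t hle hpos
    have e1 : (∑ i, |(x + t • d) i| ^ p) = ∑ i, c i * (1 + t * v i) ^ p := by
      refine Finset.sum_congr rfl fun i _ => ?_
      rw [happly t i, abs_mul, Real.mul_rpow (abs_nonneg _) (abs_nonneg _),
        abs_of_pos (hpos i)]
    show φ 0 ≤ φ t
    simp only [hφ, ← e1, hx0, zero_mul, add_zero, Real.one_rpow, mul_one]
    simpa [hc] using hle
  have hlineD : ∀ t : ℝ, HasDerivAt (fun s : ℝ => x + s • d) d t := by
    intro t
    simpa using ((hasDerivAt_id t).smul_const d).const_add x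
  have hder : ∀ᶠ t in 𝓝 (0:ℝ), HasDerivAt φ (ψ t) t := by
    have hev := hf.eventually (by simp)
    filter_upwards [hMpos, htend.eventually hev] with t hpos hC
    have hdf : DifferentiableAt ℝ f (x + t • d) := hC.differentiableAt (by norm_num)
    have h1 : HasDerivAt (fun s => f (x + s • d)) (fderiv ℝ f (x + t • d) d) t :=
      hdf.hasFDerivAt.comp_hasDerivAt t (hlineD t)
    have h2 : ∀ i ∈ Finset.univ, HasDerivAt (fun s => c i * (1 + s * v i) ^ p)
        (c i * (v i * p * (1 + t * v i) ^ (p - 1))) t := by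
      intro i _
      have ha : HasDerivAt (fun s : ℝ => 1 + s * v i) (v i) t := by
        simpa using (hasDerivAt_mul_const (v i)).const_add 1
      exact (ha.rpow_const (Or.inl (ne_of_gt (hpos i)))).const_mul (c i)
    exact h1.add ((HasDerivAt.fun_sum h2).const_mul lam)
  have hg : DifferentiableAt ℝ (fderiv ℝ f) x :=
    (hf.fderiv_right (m := 1) (by norm_num)).differentiableAt (by norm_num)
  have hder2 : HasDerivAt ψ L 0 := by
    have hgx : HasFDerivAt (fderiv ℝ f) G (x + (0:ℝ) • d) := hx0.symm ▸ hg.hasFDerivAt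
    have hcomp : HasDerivAt (fun s : ℝ => fderiv ℝ f (x + s • d)) (G d) 0 :=
      hgx.comp_hasDerivAt (0:ℝ) (hlineD 0)
    have h1 : HasDerivAt (fun s : ℝ => fderiv ℝ f (x + s • d) d) (G d d) 0 := by
      have := hcomp.clm_apply (hasDerivAt_const (0:ℝ) d)
      simpa [hx0] using this
    have h2 : ∀ i ∈ Finset.univ, HasDerivAt
        (fun s : ℝ => c i * (v i * p * (1 + s * v i) ^ (p - 1)))
        (c i * (v i * p * (v i * (p - 1)))) 0 := by
      intro i _
      have ha : HasDerivAt (fun s : ℝ => 1 + s * v i) (v i) (0:ℝ) := by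
        simpa using (hasDerivAt_mul_const (v i)).const_add 1
      have hb := ha.rpow_const (p := p - 1) (Or.inl (by norm_num : (1:ℝ) + 0 * v i ≠ 0))
      have hc2 := (hb.const_mul (v i * p)).const_mul (c i)
      refine hc2.congr_deriv ?_
      simp [Real.one_rpow]
    exact h1.add ((HasDerivAt.fun_sum h2).const_mul lam)
  have hkey := second_order_nonneg φ ψ L hder hder2 hminφ
  have hij : ∀ i j : Fin n,
      fderiv ℝ (fun y => fderiv ℝ f y (EuclideanSpace.single j 1)) x
        (EuclideanSpace.single i 1) =
      G (EuclideanSpace.single i 1) (EuclideanSpace.single j 1) := by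
    intro i j
    rw [fderiv_clm_apply hg (differentiableAt_const _)]
    simp [hG]
  have hdsum : d = ∑ i, d i • EuclideanSpace.single i (1:ℝ) := by
    have h := (EuclideanSpace.basisFun (Fin n) ℝ).sum_repr d
    simp only [EuclideanSpace.basisFun_repr, EuclideanSpace.basisFun_apply] at h
    exact h.symm
  have hGdd : G d d = ∑ i, ∑ j, (d i * d j) *
      G (EuclideanSpace.single i 1) (EuclideanSpace.single j 1) := by
    conv_lhs => rw [hdsum]
    simp only [map_sum, map_smul, ContinuousLinearMap.coe_sum', Finset.sum_apply,
      ContinuousLinearMap.coe_smul', Pi.smul_apply, ContinuousLinearMap.sum_apply,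
      ContinuousLinearMap.smul_apply, smul_eq_mul, Finset.mul_sum]
    rw [Finset.sum_comm]
    exact Finset.sum_congr rfl fun i _ => Finset.sum_congr rfl fun j _ => by ring
  have hA : (∑ i, ∑ j, v i *
      (x i * fderiv ℝ (fun y => fderiv ℝ f y (EuclideanSpace.single j 1)) x
        (EuclideanSpace.single i 1) * x j) * v j) = G d d := by
    rw [hGdd]
    refine Finset.sum_congr rfl fun i _ => Finset.sum_congr rfl fun j _ => ?_
    rw [hij i j]
    have hdi : d i = x i * v i := rfl
    have hdj : d j = x j * v j := rfl
    rw [hdi, hdj]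
    ring
  have hB : lam * p * (p - 1) * ∑ i, |x i| ^ p * (v i) ^ 2
      = lam * ∑ i, c i * (v i * p * (v i * (p - 1))) := by
    rw [Finset.mul_sum, Finset.mul_sum]
    refine Finset.sum_congr rfl fun i _ => ?_
    simp only [hc]
    ring
  rw [hA, hB]
  exact hkey
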